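/- Let R > 0, r > 0, and let y₀ ∈ ℝ² with ‖y₀‖ = d, where |R − r| < d < R + r. Define φ = arccos((d² + r² − R²)/(2dr)) and ψ = arccos((R² + d² − r²)/(2dR)). Then the two-dimensional Lebesgue measure of the intersection of the closed ball of radius R centered at the origin with the closed ball of radius r centered at y₀ equals φ·r² + ψ·R² − d·R·sin(ψ). Consequently, the uniform probability measure on the ball of radius R centered at the origin assigns to the ball of radius r centered at y₀ the probability φ·r²/(πR²) + ψ/π − (d/(πR))·sin(ψ). -/

import Mathlib

open MeasureTheory Real


lemma seg_integral (ρ a : ℝ) (hρ : 0 < ρ) (h1 : -ρ < a) (h2 : a < ρ) :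
    ∫ x in a..ρ, 2 * Real.sqrt (ρ^2 - x^2)
      = ρ^2 * Real.arccos (a/ρ) - a * Real.sqrt (ρ^2 - a^2) := by
  set F : ℝ → ℝ := fun x => x * Real.sqrt (ρ^2 - x^2) + ρ^2 * Real.arcsin (x/ρ) with hF
  have key : ∫ x in a..ρ, 2 * Real.sqrt (ρ^2 - x^2) = F ρ - F a := by
    apply intervalIntegral.integral_eq_sub_of_hasDeriv_right_of_le h2.le
    · apply Continuous.continuousOn
      exact (continuous_id.mul ((continuous_const.sub (continuous_pow 2)).sqrt)).add
        (continuous_const.mul (Real.continuous_arcsin.comp (continuous_id.div_const ρ)))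
    · intro x hx
      have hx1 : -ρ < x := h1.trans hx.1
      have hx2 : x < ρ := hx.2
      have hs : (0:ℝ) < ρ^2 - x^2 := by nlinarith
      have hsqpos : (0:ℝ) < Real.sqrt (ρ^2 - x^2) := Real.sqrt_pos.mpr hs
      have hu2 : Real.sqrt (ρ^2 - x^2) ^ 2 = ρ^2 - x^2 := Real.sq_sqrt hs.le
      have d1 : HasDerivAt (fun x : ℝ => Real.sqrt (ρ^2 - x^2))
          ((-(2*x)) / (2 * Real.sqrt (ρ^2 - x^2))) x := by
        have hinner : HasDerivAt (fun x : ℝ => ρ^2 - x^2) (-(2*x)) x := by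
          simpa using ((hasDerivAt_pow 2 x).const_sub (ρ^2))
        exact hinner.sqrt hs.ne'
      have d2 : HasDerivAt (fun x : ℝ => x * Real.sqrt (ρ^2 - x^2))
          (1 * Real.sqrt (ρ^2 - x^2) + x * ((-(2*x)) / (2 * Real.sqrt (ρ^2 - x^2)))) x :=
        (hasDerivAt_id x).mul d1
      have d3 : HasDerivAt (fun x : ℝ => ρ^2 * Real.arcsin (x/ρ))
          (ρ^2 * ((1 / Real.sqrt (1 - (x/ρ)^2)) * (1/ρ))) x := by
        have harg1 : x / ρ ≠ -1 := by
          intro h; rw [div_eq_iff hρ.ne'] at h; nlinarith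
        have harg2 : x / ρ ≠ 1 := by
          intro h; rw [div_eq_iff hρ.ne'] at h; nlinarith
        have hd : HasDerivAt (fun x : ℝ => x / ρ) (1/ρ) x := by
          simpa using (hasDerivAt_id x).div_const ρ
        exact ((Real.hasDerivAt_arcsin harg1 harg2).comp x hd).const_mul (ρ^2)
      have hD := d2.add d3
      have hsub : Real.sqrt (1 - (x/ρ)^2) = Real.sqrt (ρ^2 - x^2) / ρ := by
        rw [show (1 - (x/ρ)^2) = (ρ^2-x^2)/ρ^2 by field_simp,
          Real.sqrt_div hs.le, Real.sqrt_sq hρ.le]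
      have heq : 1 * Real.sqrt (ρ^2 - x^2) + x * ((-(2*x)) / (2 * Real.sqrt (ρ^2 - x^2)))
          + ρ^2 * ((1 / Real.sqrt (1 - (x/ρ)^2)) * (1/ρ)) = 2 * Real.sqrt (ρ^2 - x^2) := by
        rw [hsub]
        set u := Real.sqrt (ρ^2 - x^2)
        field_simp
        linear_combination (-1) * hu2
      rw [heq] at hD
      exact hD.hasDerivWithinAt
    · apply Continuous.intervalIntegrable
      exact continuous_const.mul ((continuous_const.sub (continuous_pow 2)).sqrt)
  rw [key, hF]
  simp only
  have e1 : Real.sqrt (ρ^2 - ρ^2) = 0 := by simp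
  have e2 : Real.arcsin (ρ/ρ) = π/2 := by rw [div_self hρ.ne', Real.arcsin_one]
  rw [e1, e2, Real.arccos_eq_pi_div_two_sub_arcsin]
  ring

lemma slice_volume (m : ℝ) : volume {y : ℝ | y^2 ≤ m} = ENNReal.ofReal (2 * Real.sqrt m) := by
  rcases le_or_gt 0 m with hm | hm
  · have h1 : {y : ℝ | y^2 ≤ m} = Set.Icc (-Real.sqrt m) (Real.sqrt m) := by
      ext y
      simp only [Set.mem_setOf_eq, Set.mem_Icc]
      exact Real.sq_le hm
    rw [h1, Real.volume_Icc]
    congr 1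
    ring
  · have h1 : {y : ℝ | y^2 ≤ m} = ∅ := by
      ext y; simp only [Set.mem_setOf_eq, Set.mem_empty_iff_false, iff_false, not_le]
      exact hm.trans_le (sq_nonneg y)
    have h2 : Real.sqrt m = 0 := Real.sqrt_eq_zero'.mpr hm.le
    rw [h1, h2, measure_empty, mul_zero, ENNReal.ofReal_zero]

set_option maxHeartbeats 1000000 in
lemma lens_area (R r d : ℝ) (hR : 0 < R) (hr : 0 < r) (hd : 0 < d)
    (h1 : R - r < d) (h2 : r - R < d) (hhi : d < R + r) :
    volume {p : ℝ × ℝ | p.1^2 + p.2^2 ≤ R^2 ∧ (p.1 - d)^2 + p.2^2 ≤ r^2}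
      = ENNReal.ofReal (Real.arccos ((d^2 + r^2 - R^2)/(2*d*r)) * r^2
          + Real.arccos ((R^2 + d^2 - r^2)/(2*d*R)) * R^2
          - d * R * Real.sin (Real.arccos ((R^2 + d^2 - r^2)/(2*d*R)))) := by
  set c : ℝ := (d^2 + R^2 - r^2)/(2*d) with hc
  set c' : ℝ := (d^2 + r^2 - R^2)/(2*d) with hc'
  have hcc' : c + c' = d := by rw [hc, hc', ← add_div, div_eq_iff (by positivity)]; ring
  have hcR : c < R := by rw [hc, div_lt_iff₀ (by positivity)]; nlinarith
  have hcR' : -R < c := by rw [hc, lt_div_iff₀ (by positivity)]; nlinarith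
  have hc'r : c' < r := by rw [hc', div_lt_iff₀ (by positivity)]; nlinarith
  have hc'r' : -r < c' := by rw [hc', lt_div_iff₀ (by positivity)]; nlinarith
  have hdrc : d - r < c := by linarith
  have hcRle : c ≤ R := hcR.le
  -- the set
  set S : Set (ℝ × ℝ) := {p | p.1^2 + p.2^2 ≤ R^2 ∧ (p.1 - d)^2 + p.2^2 ≤ r^2} with hS
  have hSm : MeasurableSet S := by
    rw [hS, Set.setOf_and]
    exact ((isClosed_le (by fun_prop) continuous_const).measurableSet).inter
      ((isClosed_le (by fun_prop) continuous_const).measurableSet)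
  -- integrand
  set f : ℝ → ℝ := fun x => 2 * Real.sqrt (min (R^2 - x^2) (r^2 - (x - d)^2)) with hf
  have hfc : Continuous f := by
    apply continuous_const.mul
    exact ((continuous_const.sub (continuous_pow 2)).min
      (continuous_const.sub ((continuous_id.sub continuous_const).pow 2))).sqrt
  have hf0 : ∀ x ∉ Set.Ioc (d - r) R, f x = 0 := by
    intro x hx
    rw [Set.mem_Ioc, not_and_or] at hx
    have : min (R^2 - x^2) (r^2 - (x - d)^2) ≤ 0 := by
      rcases hx with hx | hx
      · push_neg at hx
        exact le_trans (min_le_right _ _) (by nlinarith)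
      · push_neg at hx
        exact le_trans (min_le_left _ _) (by nlinarith)
    simp [hf, Real.sqrt_eq_zero'.mpr this]
  -- step 1 : volume S as a lintegral
  have step1 : volume S = ∫⁻ x : ℝ, ENNReal.ofReal (f x) := by
    rw [show (volume : Measure (ℝ × ℝ)) = Measure.prod volume volume from Measure.volume_eq_prod ℝ ℝ,
      Measure.prod_apply hSm]
    congr 1
    ext x
    have hsec : Prod.mk x ⁻¹' S = {y : ℝ | y^2 ≤ min (R^2 - x^2) (r^2 - (x - d)^2)} := by
      ext y
      simp only [Set.mem_preimage, hS, Set.mem_setOf_eq, le_min_iff]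
      constructor
      · rintro ⟨u, v⟩; constructor <;> linarith
      · rintro ⟨u, v⟩; constructor <;> linarith
    rw [hsec, slice_volume]
  -- step 2 : lintegral to integral
  have hfi : Integrable f := by
    apply hfc.integrable_of_hasCompactSupport
    apply HasCompactSupport.intro (isCompact_Icc (a := d - r) (b := R))
    intro x hx
    exact hf0 x (fun hmem => hx ⟨hmem.1.le, hmem.2⟩)
  have step2 : ∫⁻ x : ℝ, ENNReal.ofReal (f x) = ENNReal.ofReal (∫ x : ℝ, f x) :=
    (ofReal_integral_eq_lintegral_ofReal hfi
      (Filter.Eventually.of_forall fun x => by positivity)).symm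
  -- step 3 : to interval integral
  have step3 : ∫ x : ℝ, f x = ∫ x in (d - r)..R, f x := by
    rw [intervalIntegral.integral_eq_integral_of_support_subset]
    intro x hx
    by_contra hmem
    exact hx (hf0 x hmem)
  -- step 4 : split
  have hi1 : IntervalIntegrable f volume (d - r) c := hfc.intervalIntegrable _ _
  have hi2 : IntervalIntegrable f volume c R := hfc.intervalIntegrable _ _
  have step4 : ∫ x in (d - r)..R, f x = (∫ x in (d - r)..c, f x) + ∫ x in c..R, f x :=
    (intervalIntegral.integral_add_adjacent_intervals hi1 hi2).symm
  -- step 5 : right piece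
  have step5 : ∫ x in c..R, f x = R^2 * Real.arccos (c/R) - c * Real.sqrt (R^2 - c^2) := by
    rw [show (∫ x in c..R, f x) = ∫ x in c..R, 2 * Real.sqrt (R^2 - x^2) from
      intervalIntegral.integral_congr fun x hx => by
        rw [Set.uIcc_of_le hcRle] at hx
        simp only [hf]
        congr 1
        rw [min_eq_left]
        have hc2 : 2*d*c = d^2 + R^2 - r^2 := by rw [hc]; field_simp
        nlinarith [mul_le_mul_of_nonneg_left hx.1 hd.le]]
    exact seg_integral R c hR hcR' hcR
  -- step 6 : left piece
  have step6 : ∫ x in (d - r)..c, f x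
      = r^2 * Real.arccos (c'/r) - c' * Real.sqrt (r^2 - c'^2) := by
    rw [show (∫ x in (d - r)..c, f x) = ∫ x in (d - r)..c, 2 * Real.sqrt (r^2 - (x - d)^2) from
      intervalIntegral.integral_congr fun x hx => by
        rw [Set.uIcc_of_le hdrc.le] at hx
        simp only [hf]
        congr 1
        rw [min_eq_right]
        have hc2 : 2*d*c = d^2 + R^2 - r^2 := by rw [hc]; field_simp
        nlinarith [mul_le_mul_of_nonneg_left hx.2 hd.le]]
    have e1 : (∫ x in (d - r)..c, 2 * Real.sqrt (r^2 - (x - d)^2))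
        = ∫ x in (d - r - d)..(c - d), 2 * Real.sqrt (r^2 - x^2) :=
      intervalIntegral.integral_comp_sub_right (fun u => 2 * Real.sqrt (r^2 - u^2)) d
    have e2 : (∫ x in (d - c)..r, 2 * Real.sqrt (r^2 - x^2))
        = ∫ x in (-r)..(-(d - c)), 2 * Real.sqrt (r^2 - x^2) := by
      rw [show (∫ x in (d - c)..r, 2 * Real.sqrt (r^2 - x^2))
          = ∫ x in (d - c)..r, 2 * Real.sqrt (r^2 - (-x)^2) from
        intervalIntegral.integral_congr fun x _ => by rw [neg_pow]; ring_nf]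
      exact intervalIntegral.integral_comp_neg (fun x => 2 * Real.sqrt (r^2 - x^2))
    have hdc : d - c = c' := by linarith
    rw [e1, show d - r - d = -r by ring, show c - d = -(d - c) by ring, ← e2, hdc]
    exact seg_integral r c' hr hc'r' hc'r
  -- trig facts
  have hcRdiv : c / R = (R^2 + d^2 - r^2)/(2*d*R) := by
    rw [hc, div_div]; ring_nf
  have hc'rdiv : c' / r = (d^2 + r^2 - R^2)/(2*d*r) := by
    rw [hc', div_div]
  have hsq_eq : Real.sqrt (r^2 - c'^2) = Real.sqrt (R^2 - c^2) := by
    congr 1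
    rw [hc, hc']
    field_simp
    ring
  have hsin : Real.sqrt (R^2 - c^2)
      = R * Real.sin (Real.arccos ((R^2 + d^2 - r^2)/(2*d*R))) := by
    have hnn : (0:ℝ) ≤ R^2 - c^2 := by nlinarith
    have e0 : (1 - (c/R)^2) = (R^2 - c^2)/R^2 := by
      field_simp
    rw [← hcRdiv, Real.sin_arccos, e0, Real.sqrt_div hnn, Real.sqrt_sq hR.le,
      mul_comm, div_mul_cancel₀ _ hR.ne']
  rw [step1, step2, step3, step4, step5, step6]
  congr 1
  rw [hsq_eq, hsin, hcRdiv, hc'rdiv]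
  linear_combination
    (-(R * Real.sin (Real.arccos ((R^2 + d^2 - r^2)/(2*d*R))))) * hcc'

/-- The uniform probability measure on the closed Euclidean ball of radius `R`
centered at the origin in `ℝ²`: the restriction of Lebesgue measure to the ball,
normalized by the measure of the ball. -/
noncomputable def uniformOnBall (R : ℝ) : Measure (EuclideanSpace ℝ (Fin 2)) :=
  (volume (Metric.closedBall (0 : EuclideanSpace ℝ (Fin 2)) R))⁻¹ •
    volume.restrict (Metric.closedBall (0 : EuclideanSpace ℝ (Fin 2)) R)

/-- Area of the lens formed by two properly intersecting disks, and the resulting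
probability that a uniform point of the coverage disk of radius `R` lies in the guard
zone of radius `r` centered at `y₀`, where `‖y₀‖ = d` and `|R − r| < d < R + r`. -/
theorem uniform_prob_lens
    (R r d : ℝ) (hR : 0 < R) (hr : 0 < r)
    (y₀ : EuclideanSpace ℝ (Fin 2)) (hy : ‖y₀‖ = d)
    (hlo : |R - r| < d) (hhi : d < R + r)
    (φ ψ : ℝ)
    (hφ : φ = Real.arccos ((d ^ 2 + r ^ 2 - R ^ 2) / (2 * d * r)))
    (hψ : ψ = Real.arccos ((R ^ 2 + d ^ 2 - r ^ 2) / (2 * d * R))) :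
    volume (Metric.closedBall (0 : EuclideanSpace ℝ (Fin 2)) R ∩ Metric.closedBall y₀ r)
      = ENNReal.ofReal (φ * r ^ 2 + ψ * R ^ 2 - d * R * Real.sin ψ) ∧
    uniformOnBall R (Metric.closedBall y₀ r)
      = ENNReal.ofReal (φ * r ^ 2 / (π * R ^ 2) + ψ / π - (d / (π * R)) * Real.sin ψ) := by
  have hd : 0 < d := lt_of_le_of_lt (abs_nonneg _) hlo
  have h1 : R - r < d := (le_abs_self _).trans_lt hlo
  have h2 : r - R < d := by
    have := (neg_le_abs (R - r)).trans_lt hlo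
    linarith
  -- the reference point (d, 0)
  set p₀ : EuclideanSpace ℝ (Fin 2) := (WithLp.equiv 2 (Fin 2 → ℝ)).symm ![d, 0] with hp₀
  have hp₀0 : p₀ 0 = d := rfl
  have hp₀1 : p₀ 1 = 0 := rfl
  have hp₀norm : ‖p₀‖ = d := by
    rw [EuclideanSpace.norm_eq, Fin.sum_univ_two, hp₀0, hp₀1]
    rw [norm_zero, Real.norm_eq_abs, sq_abs]
    simpa using Real.sqrt_sq hd.le
  -- the reflection sending y₀ to p₀
  set T : EuclideanSpace ℝ (Fin 2) ≃ₗᵢ[ℝ] EuclideanSpace ℝ (Fin 2) :=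
    Submodule.reflection (ℝ ∙ (y₀ - p₀))ᗮ with hT
  have hTy₀ : T y₀ = p₀ := Submodule.reflection_sub (by rw [hy, hp₀norm])
  have hTpre : ∀ (x : EuclideanSpace ℝ (Fin 2)) (ρ : ℝ),
      T ⁻¹' Metric.closedBall x ρ = Metric.closedBall (T.symm x) ρ := by
    intro x ρ
    ext z
    simp only [Set.mem_preimage, Metric.mem_closedBall]
    conv_lhs => rw [← T.apply_symm_apply x]
    rw [T.dist_map]
  have hTpre1 : T ⁻¹' (Metric.closedBall (0 : EuclideanSpace ℝ (Fin 2)) R)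
      = Metric.closedBall (0 : EuclideanSpace ℝ (Fin 2)) R := by
    rw [hTpre, map_zero]
  have hTpre2 : T ⁻¹' (Metric.closedBall p₀ r) = Metric.closedBall y₀ r := by
    rw [hTpre, ← hTy₀, T.symm_apply_apply]
  -- the coordinate identification with ℝ × ℝ
  set G : EuclideanSpace ℝ (Fin 2) → ℝ × ℝ :=
    fun z => (MeasurableEquiv.finTwoArrow ((MeasurableEquiv.toLp 2 (Fin 2 → ℝ)).symm z)) with hG
  have hGmp : MeasurePreserving G volume volume :=
    (volume_preserving_finTwoArrow ℝ).comp
      (EuclideanSpace.volume_preserving_symm_measurableEquiv_toLp (Fin 2))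
  have hGz : ∀ z : EuclideanSpace ℝ (Fin 2), G z = (z 0, z 1) := by
    intro z
    rfl
  -- the target set in ℝ × ℝ
  set S : Set (ℝ × ℝ) := {p | p.1^2 + p.2^2 ≤ R^2 ∧ (p.1 - d)^2 + p.2^2 ≤ r^2} with hS
  have hSm : MeasurableSet S := by
    rw [hS, Set.setOf_and]
    exact ((isClosed_le (by fun_prop) continuous_const).measurableSet).inter
      ((isClosed_le (by fun_prop) continuous_const).measurableSet)
  -- membership in balls via coordinates
  have hball : ∀ (w : EuclideanSpace ℝ (Fin 2)) (ρ : ℝ), 0 ≤ ρ →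
      ∀ z : EuclideanSpace ℝ (Fin 2),
      (z ∈ Metric.closedBall w ρ ↔ (z 0 - w 0)^2 + (z 1 - w 1)^2 ≤ ρ^2) := by
    intro w ρ hρ z
    rw [Metric.mem_closedBall, EuclideanSpace.dist_eq, Fin.sum_univ_two,
      Real.dist_eq, Real.dist_eq, sq_abs, sq_abs,
      show ρ = Real.sqrt (ρ^2) from (Real.sqrt_sq hρ).symm,
      Real.sqrt_le_sqrt_iff (by positivity)]
    rw [Real.sq_sqrt (sq_nonneg ρ)]
  -- identify the lens with the preimage of S
  have hpre : Metric.closedBall (0 : EuclideanSpace ℝ (Fin 2)) R ∩ Metric.closedBall p₀ r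
      = G ⁻¹' S := by
    ext z
    rw [Set.mem_inter_iff, hball 0 R hR.le z, hball p₀ r hr.le z,
      Set.mem_preimage, hGz z]
    simp only [hS, Set.mem_setOf_eq, hp₀0, hp₀1]
    norm_num
  -- first claim
  have main : volume (Metric.closedBall (0 : EuclideanSpace ℝ (Fin 2)) R
      ∩ Metric.closedBall y₀ r)
      = ENNReal.ofReal (φ * r ^ 2 + ψ * R ^ 2 - d * R * Real.sin ψ) := by
    have e1 : Metric.closedBall (0 : EuclideanSpace ℝ (Fin 2)) R ∩ Metric.closedBall y₀ r
        = T ⁻¹' (Metric.closedBall (0 : EuclideanSpace ℝ (Fin 2)) R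
            ∩ Metric.closedBall p₀ r) := by
      rw [Set.preimage_inter, hTpre1, hTpre2]
    rw [e1, T.measurePreserving.measure_preimage
      ((measurableSet_closedBall.inter measurableSet_closedBall).nullMeasurableSet),
      hpre, hGmp.measure_preimage hSm.nullMeasurableSet,
      lens_area R r d hR hr hd h1 h2 hhi, hφ, hψ]
  refine ⟨main, ?_⟩
  -- volume of the big ball
  have hvol : volume (Metric.closedBall (0 : EuclideanSpace ℝ (Fin 2)) R)
      = ENNReal.ofReal (π * R^2) := by
    rw [EuclideanSpace.volume_closedBall]
    simp only [Fintype.card_fin]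
    rw [show ((2:ℕ):ℝ)/2 + 1 = 2 by norm_num, Real.Gamma_two]
    rw [← ENNReal.ofReal_pow hR.le, ← ENNReal.ofReal_mul (by positivity)]
    congr 1
    rw [div_one, sq (Real.sqrt π), Real.mul_self_sqrt Real.pi_pos.le]
    ring
  rw [uniformOnBall, Measure.smul_apply, Measure.restrict_apply measurableSet_closedBall,
    Set.inter_comm, main, hvol, smul_eq_mul,
    ← ENNReal.ofReal_inv_of_pos (by positivity), ← ENNReal.ofReal_mul (by positivity)]
  congr 1
  field_simp
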